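/- Any optimal solution (β⁽¹⁾,…,β⁽ᵍ⁾) of the group projection problem satisfies that β⁽ᵏ⁾ is a nonnegative scalar multiple of η⁽ᵏ⁾ for every group k with η⁽ᵏ⁾ ≠ 0. -/

import Mathlib

set_option maxHeartbeats 1000000 in
/-- Any optimal solution of the group projection problem has each group
    coefficient vector `β⁽ᵏ⁾` equal to a nonnegative scalar multiple of `η⁽ᵏ⁾`
    whenever `η⁽ᵏ⁾ ≠ 0`. -/
theorem stmt_13 {g : ℕ} {d : Fin g → ℕ} (η β : (k : Fin g) → Fin (d k) → ℝ)
    (lam : ℝ) (hlam : 0 ≤ lam)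
    (hfeas : ∑ k, Real.sqrt (∑ j, (β k j) ^ 2) ≤ lam)
    (hopt : ∀ β' : (k : Fin g) → Fin (d k) → ℝ,
      (∑ k, Real.sqrt (∑ j, (β' k j) ^ 2) ≤ lam) →
      ∑ k, ∑ j, (η k j - β k j) ^ 2 ≤ ∑ k, ∑ j, (η k j - β' k j) ^ 2) :
    ∀ k : Fin g, η k ≠ 0 → ∃ c : ℝ, 0 ≤ c ∧ ∀ j, β k j = c * η k j := by
  intro k hk
  set E := ∑ j, (η k j) ^ 2 with hE
  set B := ∑ j, (β k j) ^ 2 with hB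
  have hEpos : 0 < E := by
    have : ∃ j, η k j ≠ 0 := by
      by_contra h
      push_neg at h
      exact hk (funext h)
    obtain ⟨j0, hj0⟩ := this
    have : (0:ℝ) < (η k j0) ^ 2 := by positivity
    rw [hE]
    exact lt_of_lt_of_le this (Finset.single_le_sum (f := fun j => (η k j) ^ 2)
      (fun j _ => sq_nonneg _) (Finset.mem_univ j0))
  have hBnn : 0 ≤ B := Finset.sum_nonneg fun j _ => sq_nonneg _
  set e := Real.sqrt E with he
  set n := Real.sqrt B with hn
  have hepos : 0 < e := Real.sqrt_pos.mpr hEpos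
  have he2 : e ^ 2 = E := Real.sq_sqrt hEpos.le
  have hn2 : n ^ 2 = B := Real.sq_sqrt hBnn
  set t := n / e with ht
  have htn : 0 ≤ t := div_nonneg (Real.sqrt_nonneg _) hepos.le
  set β' : (k : Fin g) → Fin (d k) → ℝ := Function.update β k (fun j => t * η k j) with hβ'
  have hβ'k : β' k = fun j => t * η k j := Function.update_self _ _ _
  have hβ'ne : ∀ k', k' ≠ k → β' k' = β k' := fun k' h => Function.update_of_ne h _ _
  have hsqk : Real.sqrt (∑ j, (β' k j) ^ 2) = n := by
    rw [hβ'k]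
    have : ∑ j, (t * η k j) ^ 2 = t ^ 2 * E := by
      rw [hE, Finset.mul_sum]; exact Finset.sum_congr rfl fun j _ => by ring
    rw [this, Real.sqrt_mul (sq_nonneg t), Real.sqrt_sq htn, ← he, ht,
      div_mul_cancel₀ _ hepos.ne']
  have hfeas' : ∑ k', Real.sqrt (∑ j, (β' k' j) ^ 2) ≤ lam := by
    have : ∑ k', Real.sqrt (∑ j, (β' k' j) ^ 2)
        = ∑ k', Real.sqrt (∑ j, (β k' j) ^ 2) := by
      refine Finset.sum_congr rfl fun k' _ => ?_
      rcases eq_or_ne k' k with rfl | h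
      · rw [hsqk, hn, hB]
      · rw [hβ'ne k' h]
    rw [this]; exact hfeas
  have htot := hopt β' hfeas'
  have key : ∑ j, (η k j - β k j) ^ 2 ≤ ∑ j, (η k j - β' k j) ^ 2 := by
    have h1 : ∀ (γ : (k : Fin g) → Fin (d k) → ℝ),
        ∑ k', ∑ j, (η k' j - γ k' j) ^ 2
        = (∑ j, (η k j - γ k j) ^ 2) + ∑ k' ∈ Finset.univ.erase k, ∑ j, (η k' j - γ k' j) ^ 2 :=
      fun γ => (Finset.add_sum_erase _ _ (Finset.mem_univ k)).symm
    rw [h1 β, h1 β'] at htot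
    have heq : ∑ k' ∈ Finset.univ.erase k, ∑ j, (η k' j - β' k' j) ^ 2
        = ∑ k' ∈ Finset.univ.erase k, ∑ j, (η k' j - β k' j) ^ 2 := by
      refine Finset.sum_congr rfl fun k' hk' => ?_
      rw [hβ'ne k' (Finset.ne_of_mem_erase hk')]
    rw [heq] at htot
    linarith
  -- expand both sides
  set S := ∑ j, η k j * β k j with hS
  have expandL : ∑ j, (η k j - β k j) ^ 2 = E - 2 * S + B := by
    rw [hE, hB, hS, Finset.mul_sum, ← Finset.sum_sub_distrib, ← Finset.sum_add_distrib]
    exact Finset.sum_congr rfl fun j _ => by ring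
  have expandR : ∑ j, (η k j - β' k j) ^ 2 = E - 2 * (n * e) + B := by
    rw [hβ'k]
    have : ∑ j, (η k j - t * η k j) ^ 2 = (1 - t) ^ 2 * E := by
      rw [hE, Finset.mul_sum]; exact Finset.sum_congr rfl fun j _ => by ring
    rw [this]
    have ht2 : t ^ 2 * E = B := by
      rw [ht, div_pow, ← he2, div_mul_cancel₀ _ (pow_ne_zero 2 hepos.ne'), hn2]
    have hte : t * E = n * e := by
      rw [ht, ← he2]; field_simp
    nlinarith [ht2, hte]
  have hSge : n * e ≤ S := by
    rw [expandL, expandR] at key; linarith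
  -- Cauchy-Schwarz on EuclideanSpace
  set x : EuclideanSpace ℝ (Fin (d k)) := WithLp.toLp 2 (η k) with hx
  set y : EuclideanSpace ℝ (Fin (d k)) := WithLp.toLp 2 (β k) with hy
  have hnx : ‖x‖ = e := by
    rw [EuclideanSpace.norm_eq, he, hE]
    congr 1
    exact Finset.sum_congr rfl fun j _ => by rw [Real.norm_eq_abs, sq_abs]
  have hny : ‖y‖ = n := by
    rw [EuclideanSpace.norm_eq, hn, hB]
    congr 1
    exact Finset.sum_congr rfl fun j _ => by rw [Real.norm_eq_abs, sq_abs]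
  have hinner : (inner ℝ x y : ℝ) = S := by
    rw [hS]
    simp [PiLp.inner_apply, RCLike.inner_apply, x, y, mul_comm]
  have hCS : (inner ℝ x y : ℝ) ≤ ‖x‖ * ‖y‖ := real_inner_le_norm x y
  have hCS' : S ≤ e * n := by rw [hinner, hnx, hny] at hCS; exact hCS
  have heq : (inner ℝ x y : ℝ) = ‖x‖ * ‖y‖ := by
    rw [hinner, hnx, hny]
    linarith
  have hprop : ‖y‖ • x = ‖x‖ • y := inner_eq_norm_mul_iff_real.mp heq
  refine ⟨n / e, div_nonneg (Real.sqrt_nonneg _) hepos.le, fun j => ?_⟩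
  have := congrArg (fun v : EuclideanSpace ℝ (Fin (d k)) => v j) hprop
  rw [hnx, hny] at this
  simp only [PiLp.smul_apply, smul_eq_mul] at this
  have : n * η k j = e * β k j := this
  field_simp
  linarith [this]
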